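/- Let U ∈ ℝ^{i×n} with U Uᵀ invertible, V ∈ ℝ^{o×n}, and let P be an orthogonal projection on ℝ^o with range C. Then the constrained least-squares minimum min{‖WU − V‖_F² : W u_j ⊥ C for all columns u_j of U} equals ‖(I − P)V Uᵀ(UUᵀ)⁻¹ U − (I − P)V‖_F² + ‖PV‖_F². -/
import Mathlib


open Matrix BigOperators

/-- Squared Frobenius norm of a matrix. -/
def frobSq {m n : ℕ} (A : Matrix (Fin m) (Fin n) ℝ) : ℝ := ∑ i, ∑ j, (A i j) ^ 2

lemma frobSq_eq_trace {m n : ℕ} (A : Matrix (Fin m) (Fin n) ℝ) :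
    frobSq A = (Aᵀ * A).trace := by
  simp only [frobSq, Matrix.trace, Matrix.diag, Matrix.mul_apply, Matrix.transpose_apply,
    pow_two]
  rw [Finset.sum_comm]

lemma frobSq_nonneg {m n : ℕ} (A : Matrix (Fin m) (Fin n) ℝ) : 0 ≤ frobSq A :=
  Finset.sum_nonneg fun _ _ => Finset.sum_nonneg fun _ _ => sq_nonneg _

lemma frobSq_neg {m n : ℕ} (A : Matrix (Fin m) (Fin n) ℝ) : frobSq (-A) = frobSq A := by
  simp [frobSq]

lemma frobSq_add_of_orth {m n : ℕ} {A B : Matrix (Fin m) (Fin n) ℝ}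
    (h : (Aᵀ * B).trace = 0) : frobSq (A + B) = frobSq A + frobSq B := by
  have h' : (Bᵀ * A).trace = 0 := by
    have hh : (Bᵀ * A) = (Aᵀ * B)ᵀ := by
      rw [Matrix.transpose_mul, Matrix.transpose_transpose]
    rw [hh, Matrix.trace_transpose, h]
  simp only [frobSq_eq_trace, Matrix.transpose_add, Matrix.add_mul, Matrix.mul_add,
    Matrix.trace_add, h, h']
  ring

theorem constrained_ls_min_value
    {i n o : ℕ}
    (U : Matrix (Fin i) (Fin n) ℝ)
    (hU : IsUnit (U * Uᵀ))
    (V : Matrix (Fin o) (Fin n) ℝ)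
    (P : Matrix (Fin o) (Fin o) ℝ)
    (hPsym : Pᵀ = P) (hPidem : P * P = P) :
    IsLeast
      {r : ℝ | ∃ W : Matrix (Fin o) (Fin i) ℝ,
        (∀ j : Fin n, P.mulVec (W.mulVec (fun k => U k j)) = 0) ∧
        r = frobSq (W * U - V)}
      (frobSq ((1 - P) * V * Uᵀ * (U * Uᵀ)⁻¹ * U - (1 - P) * V) + frobSq (P * V)) := by
  have hinv : (U * Uᵀ)⁻¹ * (U * Uᵀ) = 1 :=
    Matrix.nonsing_inv_mul _ ((Matrix.isUnit_iff_isUnit_det _).mp hU)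
  have hP0 : P * (1 - P) = 0 := by
    rw [Matrix.mul_sub, Matrix.mul_one, hPidem, sub_self]
  set B : Matrix (Fin o) (Fin i) ℝ := (1 - P) * V * Uᵀ * (U * Uᵀ)⁻¹ with hB
  have hPB : P * B = 0 := by
    rw [hB, ← Matrix.mul_assoc, ← Matrix.mul_assoc, ← Matrix.mul_assoc, hP0,
      Matrix.zero_mul, Matrix.zero_mul, Matrix.zero_mul]
  have hBUU : B * (U * Uᵀ) = (1 - P) * V * Uᵀ := by
    rw [hB, Matrix.mul_assoc, hinv, Matrix.mul_one]
  have hBU : (B * U - (1 - P) * V) * Uᵀ = 0 := by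
    rw [Matrix.sub_mul, Matrix.mul_assoc, hBUU, sub_self]
  -- general least squares identity
  have key : ∀ X : Matrix (Fin o) (Fin i) ℝ,
      frobSq (X * U - (1 - P) * V)
        = frobSq ((X - B) * U) + frobSq (B * U - (1 - P) * V) := by
    intro X
    have hdec : X * U - (1 - P) * V = (X - B) * U + (B * U - (1 - P) * V) := by
      rw [Matrix.sub_mul X B]; abel
    rw [hdec]
    apply frobSq_add_of_orth
    rw [Matrix.transpose_mul, Matrix.mul_assoc, Matrix.trace_mul_comm,
      Matrix.mul_assoc, hBU, Matrix.mul_zero, Matrix.trace_zero]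
  constructor
  · refine ⟨B, ?_, ?_⟩
    · intro j
      rw [Matrix.mulVec_mulVec, hPB, Matrix.zero_mulVec]
    · have hdec : B * U - V = (B * U - (1 - P) * V) + -(P * V) := by
        rw [Matrix.sub_mul, Matrix.one_mul]; abel
      have hPA : P * (B * U - (1 - P) * V) = 0 := by
        rw [Matrix.mul_sub, ← Matrix.mul_assoc, hPB, Matrix.zero_mul,
          ← Matrix.mul_assoc, hP0, Matrix.zero_mul, sub_self]
      have horth : ((B * U - (1 - P) * V)ᵀ * (-(P * V))).trace = 0 := by
        have h2 : (B * U - (1 - P) * V)ᵀ * P = 0 := by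
          have h3 := congrArg Matrix.transpose hPA
          rwa [Matrix.transpose_mul, hPsym, Matrix.transpose_zero] at h3
        rw [Matrix.mul_neg, ← Matrix.mul_assoc, h2, Matrix.zero_mul, neg_zero,
          Matrix.trace_zero]
      rw [hdec, frobSq_add_of_orth horth, frobSq_neg]
  · rintro r ⟨W, hW, rfl⟩
    have hPWU : P * W * U = 0 := by
      ext a b
      have h := congrFun (hW b) a
      rw [Matrix.mulVec_mulVec] at h
      simpa [Matrix.mulVec, dotProduct, Matrix.mul_apply] using h
    set M : Matrix (Fin o) (Fin n) ℝ := W * U - V with hM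
    have hMdec : M = P * M + (1 - P) * M := by
      rw [Matrix.sub_mul, Matrix.one_mul]; abel
    have horthM : ((P * M)ᵀ * ((1 - P) * M)).trace = 0 := by
      rw [Matrix.transpose_mul, hPsym, Matrix.mul_assoc, ← Matrix.mul_assoc P,
        hP0, Matrix.zero_mul, Matrix.mul_zero, Matrix.trace_zero]
    have hsplit : frobSq M = frobSq (P * M) + frobSq ((1 - P) * M) := by
      conv_lhs => rw [hMdec]
      exact frobSq_add_of_orth horthM
    have hPM : P * M = -(P * V) := by
      rw [hM, Matrix.mul_sub, ← Matrix.mul_assoc, hPWU, zero_sub]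
    have h1PM : (1 - P) * M = ((1 - P) * W) * U - (1 - P) * V := by
      rw [hM, Matrix.mul_sub, ← Matrix.mul_assoc]
    have hkey := key ((1 - P) * W)
    have hnn := frobSq_nonneg (((1 - P) * W - B) * U)
    rw [hsplit, hPM, frobSq_neg, h1PM, hkey]
    linarith
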